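/- Let m be a natural number, let C, A : Fin m → Bool be two binary attributes of a sample and let Π : Fin m → Prop be a decidable predicate on the indices. Define the conditional contingency counts a := #{i | Π i ∧ A i = false ∧ C i = false}, b := #{i | Π i ∧ A i = false ∧ C i = true}, c := #{i | Π i ∧ A i = true ∧ C i = false}, d := #{i | Π i ∧ A i = true ∧ C i = true}. Then for every integer t with −min(b,c) ≤ t ≤ min(a,d) there exists a permutation σ of Fin m such that the modified sample, in which the attribute A is replaced by A ∘ σ while C and Π are unchanged, has conditional contingency counts exactly (a − t, b + t, c + t, d − t). Moreover, when d > 0 and (d : ℤ) − t > 0, the resulting shift of the count ratio satisfies (b + t)/(d − t) − b/d = ((b + d)/(d − t)) · (t/d) in ℝ. -/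

import Mathlib

open Finset

lemma crossover_key {m : ℕ} (A C : Fin m → Bool) (P : Fin m → Prop) [DecidablePred P]
    (u v : Bool) (huv : u ≠ v) (S' T' : Finset (Fin m))
    (hS : ∀ i ∈ S', P i ∧ A i = false ∧ C i = u)
    (hT : ∀ i ∈ T', P i ∧ A i = true ∧ C i = v)
    (hcard : S'.card = T'.card) :
    ∃ σ : Equiv.Perm (Fin m),
      (Finset.univ.filter (fun i => P i ∧ A (σ i) = false ∧ C i = u)).card + S'.card
          = (Finset.univ.filter (fun i => P i ∧ A i = false ∧ C i = u)).card ∧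
      (Finset.univ.filter (fun i => P i ∧ A (σ i) = false ∧ C i = v)).card
          = (Finset.univ.filter (fun i => P i ∧ A i = false ∧ C i = v)).card + S'.card ∧
      (Finset.univ.filter (fun i => P i ∧ A (σ i) = true ∧ C i = u)).card
          = (Finset.univ.filter (fun i => P i ∧ A i = true ∧ C i = u)).card + S'.card ∧
      (Finset.univ.filter (fun i => P i ∧ A (σ i) = true ∧ C i = v)).card + S'.card
          = (Finset.univ.filter (fun i => P i ∧ A i = true ∧ C i = v)).card := by
  classical
  have hdisj : Disjoint S' T' := by
    rw [Finset.disjoint_left]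
    intro i hiS hiT
    have h1 := (hS i hiS).2.1
    have h2 := (hT i hiT).2.1
    rw [h1] at h2; exact absurd h2 (by simp)
  have e : (S' : Type) ≃ (T' : Type) := Finset.equivOfCardEq hcard
  set f : Fin m → Fin m := fun x =>
    if h : x ∈ S' then (e ⟨x, h⟩ : Fin m)
    else if h : x ∈ T' then (e.symm ⟨x, h⟩ : Fin m) else x with hf
  have hfS : ∀ x (h : x ∈ S'), f x = (e ⟨x, h⟩ : Fin m) := by
    intro x h; simp [hf, h]
  have hfT : ∀ x (h : x ∈ T'), f x = (e.symm ⟨x, h⟩ : Fin m) := by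
    intro x h
    have hxS : x ∉ S' := Finset.disjoint_right.mp hdisj h
    simp [hf, hxS, h]
  have hfO : ∀ x, x ∉ S' → x ∉ T' → f x = x := by
    intro x h1 h2; simp [hf, h1, h2]
  have hinv : Function.Involutive f := by
    intro x
    by_cases hx : x ∈ S'
    · rw [hfS x hx]
      have hm : ((e ⟨x, hx⟩ : T') : Fin m) ∈ T' := (e ⟨x, hx⟩).2
      rw [hfT _ hm]
      simp
    · by_cases hx2 : x ∈ T'
      · rw [hfT x hx2]
        have hm : ((e.symm ⟨x, hx2⟩ : S') : Fin m) ∈ S' := (e.symm ⟨x, hx2⟩).2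
        rw [hfS _ hm]
        simp
      · rw [hfO x hx hx2, hfO x hx hx2]
  refine ⟨Function.Involutive.toPerm f hinv, ?_, ?_, ?_, ?_⟩
  -- facts about A ∘ f
  · -- (false, u): removed S'
    have hset : Finset.univ.filter (fun i => P i ∧ A (Function.Involutive.toPerm f hinv i) = false ∧ C i = u)
        = (Finset.univ.filter (fun i => P i ∧ A i = false ∧ C i = u)) \ S' := by
      ext i
      rw [Finset.mem_filter]
      simp only [Function.Involutive.coe_toPerm, Finset.mem_filter, Finset.mem_sdiff, Finset.mem_univ, true_and]
      by_cases hiS : i ∈ S'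
      · have hA : A (f i) = true := by
          rw [hfS i hiS]; exact (hT _ (e ⟨i, hiS⟩).2).2.1
        simp [hA, hiS]
      · by_cases hiT : i ∈ T'
        · have hCi := (hT i hiT).2.2
          have hAi := (hT i hiT).2.1
          constructor
          · rintro ⟨-, -, hCu⟩; exact (huv (hCu.symm.trans hCi)).elim
          · rintro ⟨⟨-, hA, -⟩, -⟩; rw [hAi] at hA; exact absurd hA (by simp)
        · rw [hfO i hiS hiT]; tauto
    rw [hset, Finset.card_sdiff_add_card_eq_card]
    intro i hi
    simp only [Finset.mem_filter, Finset.mem_univ, true_and]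
    exact hS i hi
  · -- (false, v): added T'
    have hset : Finset.univ.filter (fun i => P i ∧ A (Function.Involutive.toPerm f hinv i) = false ∧ C i = v)
        = (Finset.univ.filter (fun i => P i ∧ A i = false ∧ C i = v)) ∪ T' := by
      ext i
      rw [Finset.mem_filter]
      simp only [Function.Involutive.coe_toPerm, Finset.mem_filter, Finset.mem_union, Finset.mem_univ, true_and]
      by_cases hiS : i ∈ S'
      · have hA : A (f i) = true := by
          rw [hfS i hiS]; exact (hT _ (e ⟨i, hiS⟩).2).2.1
        have hCi := (hS i hiS).2.2
        have hiT : i ∉ T' := Finset.disjoint_left.mp hdisj hiS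
        constructor
        · rintro ⟨-, hA', -⟩; rw [hA] at hA'; exact absurd hA' (by simp)
        · rintro (⟨-, -, hCv⟩ | h)
          · exact (huv (hCi.symm.trans hCv)).elim
          · exact absurd h hiT
      · by_cases hiT : i ∈ T'
        · have hA : A (f i) = false := by
            rw [hfT i hiT]; exact (hS _ (e.symm ⟨i, hiT⟩).2).2.1
          simp [hA, (hT i hiT).1, (hT i hiT).2.2, hiT]
        · rw [hfO i hiS hiT]
          constructor
          · tauto
          · rintro (h | h)
            · exact h
            · exact absurd h hiT
    rw [hset, Finset.card_union_of_disjoint, hcard]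
    rw [Finset.disjoint_left]
    intro i hi hiT
    have := (Finset.mem_filter.mp hi).2.2.1
    rw [(hT i hiT).2.1] at this
    exact absurd this (by simp)
  · -- (true, u): added S'
    have hset : Finset.univ.filter (fun i => P i ∧ A (Function.Involutive.toPerm f hinv i) = true ∧ C i = u)
        = (Finset.univ.filter (fun i => P i ∧ A i = true ∧ C i = u)) ∪ S' := by
      ext i
      rw [Finset.mem_filter]
      simp only [Function.Involutive.coe_toPerm, Finset.mem_filter, Finset.mem_union, Finset.mem_univ, true_and]
      by_cases hiS : i ∈ S'
      · have hA : A (f i) = true := by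
          rw [hfS i hiS]; exact (hT _ (e ⟨i, hiS⟩).2).2.1
        simp [hA, (hS i hiS).1, (hS i hiS).2.2, hiS]
      · by_cases hiT : i ∈ T'
        · have hA : A (f i) = false := by
            rw [hfT i hiT]; exact (hS _ (e.symm ⟨i, hiT⟩).2).2.1
          have hCi := (hT i hiT).2.2
          constructor
          · rintro ⟨-, hA', -⟩; rw [hA] at hA'; exact absurd hA' (by simp)
          · rintro (⟨-, -, hCu⟩ | h)
            · exact (huv (hCu.symm.trans hCi)).elim
            · exact absurd h hiS
        · rw [hfO i hiS hiT]
          constructor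
          · tauto
          · rintro (h | h)
            · exact h
            · exact absurd h hiS
    rw [hset, Finset.card_union_of_disjoint]
    rw [Finset.disjoint_left]
    intro i hi hiS
    have := (Finset.mem_filter.mp hi).2.2.1
    rw [(hS i hiS).2.1] at this
    exact absurd this (by simp)
  · -- (true, v): removed T'
    have hset : Finset.univ.filter (fun i => P i ∧ A (Function.Involutive.toPerm f hinv i) = true ∧ C i = v)
        = (Finset.univ.filter (fun i => P i ∧ A i = true ∧ C i = v)) \ T' := by
      ext i
      rw [Finset.mem_filter]
      simp only [Function.Involutive.coe_toPerm, Finset.mem_filter, Finset.mem_sdiff, Finset.mem_univ, true_and]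
      by_cases hiT : i ∈ T'
      · have hA : A (f i) = false := by
          rw [hfT i hiT]; exact (hS _ (e.symm ⟨i, hiT⟩).2).2.1
        simp [hA, hiT]
      · by_cases hiS : i ∈ S'
        · have hCi := (hS i hiS).2.2
          have hAi := (hS i hiS).2.1
          constructor
          · rintro ⟨-, -, hCv⟩; exact (huv (hCi.symm.trans hCv)).elim
          · rintro ⟨⟨-, hA, -⟩, -⟩; rw [hAi] at hA; exact absurd hA (by simp)
        · rw [hfO i hiS hiT]; tauto
    rw [hset]
    rw [hcard, Finset.card_sdiff_add_card_eq_card]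
    intro i hi
    simp only [Finset.mem_filter, Finset.mem_univ, true_and]
    exact hT i hi


/-- Lemma 1 of the paper: shift of odds ratios by a Crossover Process.
Given binary attributes `C, A : Fin m → Bool` and a decidable predicate `P` on indices,
with conditional contingency counts `a, b, c, d`, for every integer `t` with
`-min b c ≤ t ≤ min a d` there is a permutation `σ` such that replacing `A` by `A ∘ σ`
yields contingency counts `(a - t, b + t, c + t, d - t)`; moreover the corresponding
shift of the count ratio equals `((b + d)/(d - t)) * (t/d)`. -/
theorem stmt0 (m : ℕ) (C A : Fin m → Bool) (P : Fin m → Prop) [DecidablePred P]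
    (a b c d : ℕ)
    (ha : a = (Finset.univ.filter (fun i => P i ∧ A i = false ∧ C i = false)).card)
    (hb : b = (Finset.univ.filter (fun i => P i ∧ A i = false ∧ C i = true)).card)
    (hc : c = (Finset.univ.filter (fun i => P i ∧ A i = true ∧ C i = false)).card)
    (hd : d = (Finset.univ.filter (fun i => P i ∧ A i = true ∧ C i = true)).card)
    (t : ℤ) (ht1 : -(min b c : ℤ) ≤ t) (ht2 : t ≤ (min a d : ℤ)) :
    (∃ σ : Equiv.Perm (Fin m),
      (((Finset.univ.filter (fun i => P i ∧ A (σ i) = false ∧ C i = false)).card : ℤ)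
          = (a : ℤ) - t) ∧
      (((Finset.univ.filter (fun i => P i ∧ A (σ i) = false ∧ C i = true)).card : ℤ)
          = (b : ℤ) + t) ∧
      (((Finset.univ.filter (fun i => P i ∧ A (σ i) = true ∧ C i = false)).card : ℤ)
          = (c : ℤ) + t) ∧
      (((Finset.univ.filter (fun i => P i ∧ A (σ i) = true ∧ C i = true)).card : ℤ)
          = (d : ℤ) - t)) ∧
    (0 < d → 0 < (d : ℤ) - t →
      ((b : ℝ) + (t : ℝ)) / ((d : ℝ) - (t : ℝ)) - (b : ℝ) / (d : ℝ)
        = (((b : ℝ) + (d : ℝ)) / ((d : ℝ) - (t : ℝ))) * ((t : ℝ) / (d : ℝ))) := by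
  classical
  constructor
  · rcases le_or_gt 0 t with htpos | htneg
    · -- nonnegative shift: swap between the (A=false, C=false) and (A=true, C=true) cells
      set n := t.toNat with hn
      have hnt : (n : ℤ) = t := Int.toNat_of_nonneg htpos
      have hna : n ≤ a := by omega
      have hnd : n ≤ d := by omega
      obtain ⟨S', hS'sub, hS'card⟩ := Finset.exists_subset_card_eq
        (show n ≤ (Finset.univ.filter (fun i => P i ∧ A i = false ∧ C i = false)).card from
          ha ▸ hna)
      obtain ⟨T', hT'sub, hT'card⟩ := Finset.exists_subset_card_eq
        (show n ≤ (Finset.univ.filter (fun i => P i ∧ A i = true ∧ C i = true)).card from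
          hd ▸ hnd)
      obtain ⟨σ, e1, e2, e3, e4⟩ := crossover_key A C P false true (by simp) S' T'
        (fun i hi => (Finset.mem_filter.mp (hS'sub hi)).2)
        (fun i hi => (Finset.mem_filter.mp (hT'sub hi)).2)
        (hS'card.trans hT'card.symm)
      rw [hS'card] at e1 e2 e3 e4
      exact ⟨σ, by omega, by omega, by omega, by omega⟩
    · -- negative shift: swap between the (A=false, C=true) and (A=true, C=false) cells
      set n := (-t).toNat with hn
      have hnt : (n : ℤ) = -t := Int.toNat_of_nonneg (by omega)
      have hnb : n ≤ b := by omega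
      have hnc : n ≤ c := by omega
      obtain ⟨S', hS'sub, hS'card⟩ := Finset.exists_subset_card_eq
        (show n ≤ (Finset.univ.filter (fun i => P i ∧ A i = false ∧ C i = true)).card from
          hb ▸ hnb)
      obtain ⟨T', hT'sub, hT'card⟩ := Finset.exists_subset_card_eq
        (show n ≤ (Finset.univ.filter (fun i => P i ∧ A i = true ∧ C i = false)).card from
          hc ▸ hnc)
      obtain ⟨σ, e1, e2, e3, e4⟩ := crossover_key A C P true false (by simp) S' T'
        (fun i hi => (Finset.mem_filter.mp (hS'sub hi)).2)
        (fun i hi => (Finset.mem_filter.mp (hT'sub hi)).2)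
        (hS'card.trans hT'card.symm)
      rw [hS'card] at e1 e2 e3 e4
      exact ⟨σ, by omega, by omega, by omega, by omega⟩
  · intro hd0 hdt0
    have h1 : (d : ℝ) ≠ 0 := by positivity
    have h2 : (d : ℝ) - (t : ℝ) ≠ 0 := by
      have : (t : ℝ) < (d : ℝ) := by exact_mod_cast (by omega : t < (d : ℤ))
      linarith
    field_simp
    ring
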